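/- If M is a Markov matrix with Mᵖ entrywise positive for some p, and E is the vector with ME = E and entries summing to 1, then all entries of E are positive. -/

import Mathlib

open Matrix Filter Topology

/-- The column variation of a real matrix: half the maximum ℓ¹-distance
between two columns. -/
noncomputable def var {m n : ℕ} (A : Matrix (Fin m) (Fin n) ℝ) : ℝ :=
  (1/2) * ⨆ j : Fin n, ⨆ k : Fin n, ∑ i, |A i j - A i k|

theorem stmt11 {n : ℕ} (M : Matrix (Fin n) (Fin n) ℝ)
    (hnonneg : ∀ i j, 0 ≤ M i j) (hM : ∀ k, ∑ i, M i k = 1)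
    (p : ℕ) (hp : 0 < p) (hpos : ∀ i j, 0 < (M ^ p) i j)
    (E : Fin n → ℝ) (hE : M.mulVec E = E) (hEsum : ∑ j, E j = 1) :
    ∀ i, 0 < E i := by
  intro i0
  have hAE : ∀ q, (M ^ q).mulVec E = E := by
    intro q
    induction q with
    | zero => simp
    | succ k ih => rw [pow_succ', ← Matrix.mulVec_mulVec, ih, hE]
  have hcol : ∀ q k, ∑ i, (M ^ q) i k = 1 := by
    intro q
    induction q with
    | zero => intro k; simp [Matrix.one_apply]
    | succ m ih =>
      intro k
      rw [pow_succ']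
      simp only [Matrix.mul_apply]
      rw [Finset.sum_comm]
      have h1 : ∀ l ∈ Finset.univ, (∑ i, M i l * (M ^ m) l k) = (M ^ m) l k := by
        intro l _
        rw [← Finset.sum_mul, hM, one_mul]
      rw [Finset.sum_congr rfl h1, ih]
  set A := M ^ p with hAdef
  have hApos : ∀ i j, 0 < A i j := hpos
  have hAEi : ∀ i, ∑ j, A i j * E j = E i := by
    intro i
    have := congrFun (hAE p) i
    simpa [Matrix.mulVec, dotProduct] using this
  have hle : ∀ i, |E i| ≤ ∑ j, A i j * |E j| := by
    intro i
    rw [← hAEi i]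
    calc |∑ j, A i j * E j| ≤ ∑ j, |A i j * E j| := Finset.abs_sum_le_sum_abs _ _
      _ = ∑ j, A i j * |E j| := by
          refine Finset.sum_congr rfl fun j _ => ?_
          rw [abs_mul, abs_of_nonneg (hApos i j).le]
  have hsum_eq : ∑ i, |E i| = ∑ i, ∑ j, A i j * |E j| := by
    rw [Finset.sum_comm]
    refine Finset.sum_congr rfl fun j _ => ?_
    rw [← Finset.sum_mul, hcol p j, one_mul]
  have heq : ∀ i, |E i| = ∑ j, A i j * |E j| :=
    fun i => (Finset.sum_eq_sum_iff_of_le (fun i _ => hle i)).mp hsum_eq i (Finset.mem_univ i)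
  -- From equality at i0, all E j have the same sign
  have hEnonneg : ∀ j, 0 ≤ E j := by
    have key : |E i0| = ∑ j, |A i0 j * E j| := by
      rw [heq i0]
      refine Finset.sum_congr rfl fun j _ => ?_
      rw [abs_mul, abs_of_nonneg (hApos i0 j).le]
    rcases le_or_gt 0 (E i0) with h0 | h0
    · -- |E i0| = E i0 = ∑ a_j, so ∑ (|a_j| - a_j) = 0
      have hz : ∑ j, (|A i0 j * E j| - A i0 j * E j) = 0 := by
        rw [Finset.sum_sub_distrib, hAEi i0, ← key, abs_of_nonneg h0, sub_self]
      have hterm : ∀ j ∈ Finset.univ, (0:ℝ) ≤ |A i0 j * E j| - A i0 j * E j :=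
        fun j _ => sub_nonneg.mpr (le_abs_self _)
      intro j
      have := (Finset.sum_eq_zero_iff_of_nonneg hterm).mp hz j (Finset.mem_univ j)
      have habs : A i0 j * E j = |A i0 j * E j| := by linarith
      have hnn : 0 ≤ A i0 j * E j := habs ▸ abs_nonneg _
      nlinarith [hApos i0 j]
    · -- |E i0| = -E i0, so ∑ (|a_j| + a_j) = 0, all a_j ≤ 0, contradiction with sum = 1
      exfalso
      have hz : ∑ j, (|A i0 j * E j| + A i0 j * E j) = 0 := by
        rw [Finset.sum_add_distrib, hAEi i0, ← key, abs_of_neg h0]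
        ring
      have hterm : ∀ j ∈ Finset.univ, (0:ℝ) ≤ |A i0 j * E j| + A i0 j * E j :=
        fun j _ => by linarith [neg_abs_le (A i0 j * E j)]
      have hEle : ∀ j, E j ≤ 0 := by
        intro j
        have := (Finset.sum_eq_zero_iff_of_nonneg hterm).mp hz j (Finset.mem_univ j)
        have : A i0 j * E j ≤ 0 := by
          nlinarith [abs_nonneg (A i0 j * E j)]
        nlinarith [hApos i0 j]
      have : ∑ j, E j ≤ 0 := Finset.sum_nonpos fun j _ => hEle j
      linarith
  obtain ⟨j0, hj0⟩ : ∃ j0, 0 < E j0 := by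
    by_contra h
    push_neg at h
    have : ∑ j, E j ≤ 0 := Finset.sum_nonpos fun j _ => h j
    linarith
  rw [← hAEi i0]
  exact Finset.sum_pos' (fun j _ => mul_nonneg (hApos i0 j).le (hEnonneg j))
    ⟨j0, Finset.mem_univ j0, mul_pos (hApos i0 j0) hj0⟩
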